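/- In ℝ², let R = ℝ₊·(0,1), C = B + R where B is the closed unit ball, and K = clcone(C × {1}) ⊆ ℝ³. Then the polar cone of K equals {(y₁,y₂,y₃) : y₂ ≤ 0, y₃ ≤ 0, and √(y₁² + y₂²) + y₃ ≤ 0}. -/

import Mathlib

open scoped Pointwise RealInnerProductSpace

noncomputable def e2 : EuclideanSpace ℝ (Fin 2) := !₂[0, 1]

lemma norm_eq_sqrt2 (u : EuclideanSpace ℝ (Fin 2)) :
    ‖u‖ = Real.sqrt ((u 0) ^ 2 + (u 1) ^ 2) := by
  rw [EuclideanSpace.norm_eq]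
  simp [Fin.sum_univ_two, Real.norm_eq_abs, sq_abs]

lemma inner_decomp (u b : EuclideanSpace ℝ (Fin 2)) (t : ℝ) :
    ⟪b + t • e2, u⟫ = ⟪b, u⟫ + t * u 1 := by
  simp [e2, inner_add_left, real_inner_smul_left, PiLp.inner_apply, Fin.sum_univ_two,
    RCLike.inner_apply]
  ring

theorem polar_cone_of_ball_pen_cone :
    {u : EuclideanSpace ℝ (Fin 2) × ℝ |
        ∀ k ∈ closure (⋃ ρ ∈ Set.Ioi (0 : ℝ),
          ρ • ((Metric.closedBall (0 : EuclideanSpace ℝ (Fin 2)) 1 +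
              {x : EuclideanSpace ℝ (Fin 2) |
                ∃ t : ℝ, 0 ≤ t ∧ x = t • (!₂[0, 1] : EuclideanSpace ℝ (Fin 2))}) ×ˢ
            ({1} : Set ℝ))),
          ⟪k.1, u.1⟫ + k.2 * u.2 ≤ 0} =
      {u : EuclideanSpace ℝ (Fin 2) × ℝ |
        u.1 1 ≤ 0 ∧ u.2 ≤ 0 ∧ Real.sqrt ((u.1 0) ^ 2 + (u.1 1) ^ 2) + u.2 ≤ 0} := by
  ext u
  simp only [Set.mem_setOf_eq]
  rw [← norm_eq_sqrt2]
  constructor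
  · intro H
    have key : ∀ b : EuclideanSpace ℝ (Fin 2), ‖b‖ ≤ 1 → ∀ t : ℝ, 0 ≤ t →
        ⟪b, u.1⟫ + t * u.1 1 + u.2 ≤ 0 := by
      intro b hb t ht
      have hmem : (b + t • e2, (1 : ℝ)) ∈ ⋃ ρ ∈ Set.Ioi (0 : ℝ),
          ρ • ((Metric.closedBall (0 : EuclideanSpace ℝ (Fin 2)) 1 +
              {x : EuclideanSpace ℝ (Fin 2) |
                ∃ t : ℝ, 0 ≤ t ∧ x = t • (!₂[0, 1] : EuclideanSpace ℝ (Fin 2))}) ×ˢ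
            ({1} : Set ℝ)) := by
        refine Set.mem_iUnion₂.2 ⟨1, Set.mem_Ioi.2 one_pos, ?_⟩
        refine ⟨(b + t • e2, 1), ?_, by simp⟩
        refine Set.mem_prod.2 ⟨?_, rfl⟩
        exact Set.add_mem_add (by simpa [dist_zero_right] using hb) ⟨t, ht, by rw [e2]⟩
      have := H _ (subset_closure hmem)
      calc ⟪b, u.1⟫ + t * u.1 1 + u.2 = ⟪b + t • e2, u.1⟫ + 1 * u.2 := by
            rw [inner_decomp]; ring
        _ ≤ 0 := this
    have h2 : u.2 ≤ 0 := by simpa using key 0 (by simp) 0 le_rfl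
    have h1 : u.1 1 ≤ 0 := by
      by_contra h
      push_neg at h
      have ht : (0 : ℝ) ≤ (1 - u.2) / u.1 1 := div_nonneg (by linarith) h.le
      have := key 0 (by simp) _ ht
      rw [div_mul_cancel₀ _ (ne_of_gt h)] at this
      simp at this
      linarith
    refine ⟨h1, h2, ?_⟩
    rcases eq_or_ne u.1 0 with h | h
    · simpa [h] using h2
    · have hb : ‖(‖u.1‖⁻¹ • u.1 : EuclideanSpace ℝ (Fin 2))‖ ≤ 1 := by
        rw [norm_smul, norm_inv, norm_norm, inv_mul_cancel₀ (norm_ne_zero_iff.2 h)]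
      have hkey := key _ hb 0 le_rfl
      rw [real_inner_smul_left, real_inner_self_eq_norm_sq] at hkey
      have hs : ‖u.1‖⁻¹ * ‖u.1‖ ^ 2 = ‖u.1‖ := by
        rw [sq, ← mul_assoc, inv_mul_cancel₀ (norm_ne_zero_iff.2 h), one_mul]
      rw [hs] at hkey
      linarith
  · rintro ⟨h1, h2, h3⟩
    intro k hk
    have hcl : IsClosed {k : EuclideanSpace ℝ (Fin 2) × ℝ | ⟪k.1, u.1⟫ + k.2 * u.2 ≤ 0} := by
      apply isClosed_le _ continuous_const
      exact ((continuous_fst.inner continuous_const).add (continuous_snd.mul continuous_const))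
    refine closure_minimal ?_ hcl hk
    rintro p hp
    simp only [Set.mem_iUnion, Set.mem_smul_set, Set.mem_prod, Set.mem_add,
      Set.mem_singleton_iff, Set.mem_setOf_eq, Metric.mem_closedBall, dist_zero_right,
      Set.mem_Ioi] at hp ⊢
    obtain ⟨ρ, hρ, x, ⟨⟨b, hb, r, ⟨t, ht, hr⟩, hsum⟩, hx2⟩, rfl⟩ := hp
    have e1 : (ρ • x).1 = ρ • x.1 := rfl
    have e2' : (ρ • x).2 = ρ * x.2 := rfl
    have hr' : r = t • e2 := by rw [hr]; rfl
    rw [e1, e2', hx2, ← hsum, hr', real_inner_smul_left, inner_add_left, real_inner_smul_left]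
    have hv : ⟪e2, u.1⟫ = u.1 1 := by
      simp [e2, PiLp.inner_apply, Fin.sum_univ_two, RCLike.inner_apply]
    rw [hv]
    have hCS : ⟪b, u.1⟫ ≤ ‖u.1‖ := by
      have := real_inner_le_norm b u.1
      nlinarith [norm_nonneg u.1]
    have htn : t * u.1 1 ≤ 0 := mul_nonpos_of_nonneg_of_nonpos ht h1
    have hmain : ⟪b, u.1⟫ + t * u.1 1 + u.2 ≤ 0 := by linarith
    nlinarith [mul_nonneg hρ.le (neg_nonneg.2 hmain)]
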